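/- arXiv:2601.01351 — 2 statements merged into one kernel-verified Lean document; each statement's English description precedes it below -/
import Mathlib

section
/- Let A be a real symmetric positive definite p×p matrix and B a real symmetric p×p matrix. Then ‖δ(B) − δ(A)‖ = ‖Zᵀ(B−A)y‖ ≤ λ_max(ZᵀAZ)^{1/2} · (yᵀAy)^{1/2} · ‖A^{-1}‖ · ‖B−A‖. -/
open Matrix

/-- The spectral norm (operator 2-norm) of a real matrix. -/
noncomputable def spec {m n : ℕ} (M : Matrix (Fin m) (Fin n) ℝ) : ℝ :=
  ‖LinearMap.toContinuousLinearMap (Matrix.toEuclideanLin M)‖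

/-- The smallest (real) eigenvalue of a square real matrix: `sInf` of its real spectrum.
For a symmetric matrix this is the smallest eigenvalue. -/
noncomputable def lmin {n : ℕ} (M : Matrix (Fin n) (Fin n) ℝ) : ℝ :=
  sInf (spectrum ℝ M)

/-- The largest (real) eigenvalue of a square real matrix: `sSup` of its real spectrum. -/
noncomputable def lmax {n : ℕ} (M : Matrix (Fin n) (Fin n) ℝ) : ℝ :=
  sSup (spectrum ℝ M)

/-- The Euclidean norm of a vector in `ℝ^n`. -/
noncomputable def vnorm {n : ℕ} (v : Fin n → ℝ) : ℝ :=
  Real.sqrt (∑ i, (v i) ^ 2)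

/-- `W = (Z, y)`: the `p × (m+1)` matrix obtained by appending `y` as a last column to `Z`. -/
def appendCol {p m : ℕ} (Z : Matrix (Fin p) (Fin m) ℝ) (y : Fin p → ℝ) :
    Matrix (Fin p) (Fin (m + 1)) ℝ :=
  Matrix.of fun i j => Fin.lastCases (y i) (fun k => Z i k) j

/-- `γ(A) = ZᵀAZ − λ_min(WᵀAW)·I_m`. -/
noncomputable def gam {p m : ℕ} (Z : Matrix (Fin p) (Fin m) ℝ) (y : Fin p → ℝ)
    (A : Matrix (Fin p) (Fin p) ℝ) : Matrix (Fin m) (Fin m) ℝ :=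
  Zᵀ * A * Z - lmin ((appendCol Z y)ᵀ * A * appendCol Z y) • (1 : Matrix (Fin m) (Fin m) ℝ)

/-- `δ(A) = ZᵀAy`. -/
noncomputable def del {p m : ℕ} (Z : Matrix (Fin p) (Fin m) ℝ) (y : Fin p → ℝ)
    (A : Matrix (Fin p) (Fin p) ℝ) : Fin m → ℝ :=
  (Zᵀ * A) *ᵥ y

/-- The weighted total least squares estimator `β̂(A) = γ(A)⁻¹ δ(A)`. -/
noncomputable def betahat {p m : ℕ} (Z : Matrix (Fin p) (Fin m) ℝ) (y : Fin p → ℝ)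
    (A : Matrix (Fin p) (Fin p) ℝ) : Fin m → ℝ :=
  (gam Z y A)⁻¹ *ᵥ del Z y A

open scoped Matrix.Norms.L2Operator
open scoped MatrixOrder

lemma spec_eq_norm {a b : ℕ} (M : Matrix (Fin a) (Fin b) ℝ) : spec M = ‖M‖ := rfl

lemma vnorm_eq {n : ℕ} (v : Fin n → ℝ) :
    vnorm v = ‖(EuclideanSpace.equiv (Fin n) ℝ).symm v‖ := by
  simp [vnorm, EuclideanSpace.norm_eq, Real.norm_eq_abs, sq_abs]

lemma vnorm_mulVec_le {a b : ℕ} (M : Matrix (Fin a) (Fin b) ℝ) (v : Fin b → ℝ) :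
    vnorm (M *ᵥ v) ≤ ‖M‖ * vnorm v := by
  rw [vnorm_eq, vnorm_eq]
  exact M.l2_opNorm_mulVec ((EuclideanSpace.equiv (Fin b) ℝ).symm v)

lemma norm_diagonal_le {n : ℕ} {v : Fin n → ℝ} {c : ℝ} (hc : 0 ≤ c) (h : ∀ i, |v i| ≤ c) :
    ‖Matrix.diagonal v‖ ≤ c := by
  rw [Matrix.l2_opNorm_def]
  refine ContinuousLinearMap.opNorm_le_bound _ hc fun x => ?_
  rw [LinearEquiv.trans_apply]
  have hx : ∀ (w : EuclideanSpace ℝ (Fin n)), ‖w‖ = Real.sqrt (∑ i, (w i) ^ 2) := by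
    intro w; simp [EuclideanSpace.norm_eq, Real.norm_eq_abs, sq_abs]
  have happ : ∀ i, (LinearMap.toContinuousLinearMap
      (Matrix.toEuclideanLin (Matrix.diagonal v)) x) i = v i * x i := by
    intro i
    show (Matrix.diagonal v *ᵥ (WithLp.equiv 2 _ x)) i = _
    simp [Matrix.mulVec_diagonal]
  rw [hx, hx]
  calc Real.sqrt (∑ i, ((LinearMap.toContinuousLinearMap
        (Matrix.toEuclideanLin (Matrix.diagonal v)) x) i) ^ 2)
      = Real.sqrt (∑ i, (v i * x i) ^ 2) := by
        congr 1; exact Finset.sum_congr rfl fun i _ => by rw [happ i]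
    _ ≤ Real.sqrt (∑ i, c ^ 2 * (x i) ^ 2) := by
        apply Real.sqrt_le_sqrt
        apply Finset.sum_le_sum
        intro i _
        rw [mul_pow]
        apply mul_le_mul_of_nonneg_right _ (sq_nonneg _)
        calc (v i) ^ 2 = |v i| ^ 2 := (sq_abs _).symm
          _ ≤ c ^ 2 := by apply pow_le_pow_left₀ (abs_nonneg _) (h i)
    _ = c * Real.sqrt (∑ i, (x i) ^ 2) := by
        rw [← Finset.mul_sum, Real.sqrt_mul (sq_nonneg c), Real.sqrt_sq hc]

lemma norm_one_mat {n : ℕ} (hn : 0 < n) : ‖(1 : Matrix (Fin n) (Fin n) ℝ)‖ = 1 := by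
  haveI : Nonempty (Fin n) := Fin.pos_iff_nonempty.mp hn
  rw [Matrix.cstar_norm_def, _root_.map_one]
  exact ContinuousLinearMap.norm_id

lemma norm_unitary {n : ℕ} (hn : 0 < n) (U : Matrix (Fin n) (Fin n) ℝ)
    (hU : U ∈ Matrix.unitaryGroup (Fin n) ℝ) : ‖U‖ = 1 := by
  have h1 : Uᴴ * U = 1 := by
    rw [← Matrix.star_eq_conjTranspose]
    exact Matrix.mem_unitaryGroup_iff'.mp hU
  have h2 : ‖U‖ * ‖U‖ = 1 := by
    rw [← Matrix.l2_opNorm_conjTranspose_mul_self, h1, norm_one_mat hn]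
  rcases mul_self_eq_one_iff.mp h2 with h | h
  · exact h
  · exfalso; nlinarith [norm_nonneg U, h]

lemma norm_le_lmax {n : ℕ} (hn : 0 < n) {P : Matrix (Fin n) (Fin n) ℝ} (hP : P.PosSemidef) :
    ‖P‖ ≤ lmax P := by
  haveI : Nonempty (Fin n) := Fin.pos_iff_nonempty.mp hn
  have hH := hP.1
  have hspec : spectrum ℝ P = Set.range hH.eigenvalues := hH.spectrum_real_eq_range_eigenvalues
  have hbdd : BddAbove (Set.range hH.eigenvalues) := (Set.finite_range _).bddAbove
  have hle : ∀ i, hH.eigenvalues i ≤ lmax P := fun i => by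
    rw [lmax, hspec]; exact le_csSup hbdd ⟨i, rfl⟩
  have hc : 0 ≤ lmax P :=
    le_trans (hP.eigenvalues_nonneg (Classical.arbitrary _)) (hle _)
  have habs : ∀ i, |hH.eigenvalues i| ≤ lmax P := fun i => by
    rw [abs_of_nonneg (hP.eigenvalues_nonneg i)]; exact hle i
  calc ‖P‖ = ‖(hH.eigenvectorUnitary : Matrix (Fin n) (Fin n) ℝ) *
        Matrix.diagonal (RCLike.ofReal ∘ hH.eigenvalues) *
        star (hH.eigenvectorUnitary : Matrix (Fin n) (Fin n) ℝ)‖ := by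
        conv_lhs => rw [hH.spectral_theorem, Unitary.conjStarAlgAut_apply]
    _ ≤ ‖(hH.eigenvectorUnitary : Matrix (Fin n) (Fin n) ℝ) *
        Matrix.diagonal (RCLike.ofReal ∘ hH.eigenvalues)‖ *
        ‖star (hH.eigenvectorUnitary : Matrix (Fin n) (Fin n) ℝ)‖ := Matrix.l2_opNorm_mul _ _
    _ ≤ ‖(hH.eigenvectorUnitary : Matrix (Fin n) (Fin n) ℝ)‖ *
        ‖Matrix.diagonal (RCLike.ofReal ∘ hH.eigenvalues)‖ *
        ‖star (hH.eigenvectorUnitary : Matrix (Fin n) (Fin n) ℝ)‖ := by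
        apply mul_le_mul_of_nonneg_right (Matrix.l2_opNorm_mul _ _) (norm_nonneg _)
    _ ≤ 1 * lmax P * 1 := by
        have hUmem : (hH.eigenvectorUnitary : Matrix (Fin n) (Fin n) ℝ) ∈ Matrix.unitaryGroup (Fin n) ℝ := (hH.eigenvectorUnitary).2
        have hU1 : ‖(hH.eigenvectorUnitary : Matrix (Fin n) (Fin n) ℝ)‖ = 1 :=
          norm_unitary hn _ hUmem
        have hU2 : ‖star (hH.eigenvectorUnitary : Matrix (Fin n) (Fin n) ℝ)‖ = 1 := by
          rw [Matrix.star_eq_conjTranspose, Matrix.l2_opNorm_conjTranspose]; exact hU1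
        have hD : ‖(Matrix.diagonal (RCLike.ofReal ∘ hH.eigenvalues) : Matrix (Fin n) (Fin n) ℝ)‖ ≤ lmax P := by
          have : (RCLike.ofReal ∘ hH.eigenvalues : Fin n → ℝ) = hH.eigenvalues := by
            funext i; simp [RCLike.ofReal_real_eq_id]
          rw [this]
          exact norm_diagonal_le hc habs
        rw [hU1, hU2]
        exact mul_le_mul_of_nonneg_right (mul_le_mul_of_nonneg_left hD zero_le_one) zero_le_one
    _ = lmax P := by ring

/-- For `A` symmetric positive definite and `B` symmetric:
`‖δ(B) − δ(A)‖ = ‖Zᵀ(B−A)y‖ ≤ λ_max(ZᵀAZ)^{1/2}·(yᵀAy)^{1/2}·‖A⁻¹‖·‖B−A‖`. -/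
theorem stmt3 {p m : ℕ} (hp : 0 < p) (hm : 0 < m)
    (Z : Matrix (Fin p) (Fin m) ℝ) (y : Fin p → ℝ)
    (A B : Matrix (Fin p) (Fin p) ℝ) (hA : A.PosDef) (hBsymm : B.IsSymm) :
    vnorm (del Z y B - del Z y A) = vnorm ((Zᵀ * (B - A)) *ᵥ y) ∧
      vnorm ((Zᵀ * (B - A)) *ᵥ y) ≤
        Real.sqrt (lmax (Zᵀ * A * Z)) * Real.sqrt (y ⬝ᵥ A *ᵥ y) *
          (spec A⁻¹ * spec (B - A)) := by
  constructor
  · congr 1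
    simp [del, Matrix.mul_sub, Matrix.sub_mulVec]
  · set S := CFC.sqrt A with hSdef
    have hSH : S.IsHermitian := (CFC.sqrt_nonneg A).posSemidef.1
    have hSt : Sᵀ = S := by
      rw [← Matrix.conjTranspose_eq_transpose_of_trivial]; exact hSH
    have hSS : S * S = A := CFC.sqrt_mul_sqrt_self A hA.posSemidef.nonneg
    have hdet : IsUnit S.det := by
      have hmul : S.det * S.det = A.det := by rw [← Matrix.det_mul, hSS]
      have hApos := hA.det_pos
      have hne : S.det ≠ 0 := by
        intro h; rw [h, mul_zero] at hmul; rw [← hmul] at hApos; exact lt_irrefl _ hApos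
      exact hne.isUnit
    have hS1 : S * S⁻¹ = 1 := Matrix.mul_nonsing_inv S hdet
    have hS1' : S⁻¹ * S = 1 := Matrix.nonsing_inv_mul S hdet
    have hSinvt : (S⁻¹)ᵀ = S⁻¹ := by
      rw [← Matrix.conjTranspose_eq_transpose_of_trivial]; exact hSH.inv
    set C := S⁻¹ * (B - A) * S⁻¹ with hCdef
    -- factorization
    have key : Zᵀ * (B - A) = (S * Z)ᵀ * C * S := by
      rw [Matrix.transpose_mul, hSt, hCdef]
      calc Zᵀ * (B - A)
          = Zᵀ * (S * (S⁻¹ * ((B - A) * (S⁻¹ * S)))) := by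
            rw [hS1']
            rw [Matrix.mul_one, ← Matrix.mul_assoc S S⁻¹, hS1, Matrix.one_mul]
        _ = Zᵀ * S * (S⁻¹ * (B - A) * S⁻¹) * S := by
            simp only [Matrix.mul_assoc]
      -- done
    have hvec : (Zᵀ * (B - A)) *ᵥ y = ((S * Z)ᵀ * C) *ᵥ (S *ᵥ y) := by
      rw [key, Matrix.mulVec_mulVec, Matrix.mul_assoc]
    -- bound on ‖(S*Z)ᵀ‖
    have hZt : Zᴴ = Zᵀ := Matrix.conjTranspose_eq_transpose_of_trivial Z
    have hPSD : (Zᵀ * A * Z).PosSemidef := by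
      have := hA.posSemidef.conjTranspose_mul_mul_same Z
      rwa [hZt] at this
    have hSZsq : ‖S * Z‖ * ‖S * Z‖ = ‖Zᵀ * A * Z‖ := by
      rw [← Matrix.l2_opNorm_conjTranspose_mul_self]
      congr 1
      rw [Matrix.conjTranspose_mul, hZt, hSH.eq]
      simp only [Matrix.mul_assoc]
      rw [← Matrix.mul_assoc S S Z, hSS]
    have hSZ : ‖(S * Z)ᵀ‖ ≤ Real.sqrt (lmax (Zᵀ * A * Z)) := by
      have h1 : ‖(S * Z)ᵀ‖ = ‖S * Z‖ := by
        rw [← Matrix.conjTranspose_eq_transpose_of_trivial, Matrix.l2_opNorm_conjTranspose]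
      rw [h1, show ‖S * Z‖ = Real.sqrt (‖S * Z‖ * ‖S * Z‖) by
        rw [Real.sqrt_mul_self (norm_nonneg _)], hSZsq]
      exact Real.sqrt_le_sqrt (norm_le_lmax hm hPSD)
    -- bound on ‖C‖
    have hAinv : A⁻¹ = S⁻¹ * S⁻¹ := by rw [← hSS, Matrix.mul_inv_rev]
    have hSinvsq : ‖S⁻¹‖ * ‖S⁻¹‖ = spec A⁻¹ := by
      rw [spec_eq_norm, hAinv, ← Matrix.l2_opNorm_conjTranspose_mul_self]
      congr 1
      rw [← Matrix.conjTranspose_eq_transpose_of_trivial] at hSinvt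
      rw [hSinvt]
    have hC : ‖C‖ ≤ spec A⁻¹ * spec (B - A) := by
      calc ‖C‖ ≤ ‖S⁻¹ * (B - A)‖ * ‖S⁻¹‖ := Matrix.l2_opNorm_mul _ _
        _ ≤ ‖S⁻¹‖ * ‖B - A‖ * ‖S⁻¹‖ :=
            mul_le_mul_of_nonneg_right (Matrix.l2_opNorm_mul _ _) (norm_nonneg _)
        _ = ‖S⁻¹‖ * ‖S⁻¹‖ * ‖B - A‖ := by ring
        _ = spec A⁻¹ * spec (B - A) := by rw [hSinvsq, ← spec_eq_norm (B - A)]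
    -- norm of S *ᵥ y
    have hSy : vnorm (S *ᵥ y) = Real.sqrt (y ⬝ᵥ A *ᵥ y) := by
      rw [vnorm]
      congr 1
      have h1 : ∑ i, (S *ᵥ y) i ^ 2 = (S *ᵥ y) ⬝ᵥ (S *ᵥ y) := by
        simp [dotProduct, sq]
      have h2 : y ⬝ᵥ A *ᵥ y = (S *ᵥ y) ⬝ᵥ (S *ᵥ y) := by
        rw [← hSS, ← Matrix.mulVec_mulVec, dotProduct_mulVec,
          ← Matrix.mulVec_transpose, hSt]
      rw [h1, h2]
    -- final chain
    calc vnorm ((Zᵀ * (B - A)) *ᵥ y)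
        = vnorm (((S * Z)ᵀ * C) *ᵥ (S *ᵥ y)) := by rw [hvec]
      _ ≤ ‖(S * Z)ᵀ * C‖ * vnorm (S *ᵥ y) := vnorm_mulVec_le _ _
      _ ≤ (‖(S * Z)ᵀ‖ * ‖C‖) * vnorm (S *ᵥ y) := by
          apply mul_le_mul_of_nonneg_right (Matrix.l2_opNorm_mul _ _)
          rw [hSy]; exact Real.sqrt_nonneg _
      _ = ‖(S * Z)ᵀ‖ * ‖C‖ * Real.sqrt (y ⬝ᵥ A *ᵥ y) := by rw [hSy]
      _ ≤ Real.sqrt (lmax (Zᵀ * A * Z)) * (spec A⁻¹ * spec (B - A)) *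
            Real.sqrt (y ⬝ᵥ A *ᵥ y) := by
          apply mul_le_mul_of_nonneg_right _ (Real.sqrt_nonneg _)
          exact mul_le_mul hSZ hC (norm_nonneg _) (Real.sqrt_nonneg _)
      _ = Real.sqrt (lmax (Zᵀ * A * Z)) * Real.sqrt (y ⬝ᵥ A *ᵥ y) *
            (spec A⁻¹ * spec (B - A)) := by ring
end

section
/- Let A be a real symmetric positive definite p×p matrix and B a real symmetric p×p matrix. Then ‖γ(B) − γ(A)‖ ≤ ‖Zᵀ(B−A)Z‖ + ‖Wᵀ(B−A)W‖ ≤ (λ_max(ZᵀAZ) + λ_max(WᵀAW)) · ‖A^{-1}‖ · ‖B−A‖. -/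
open Matrix

section specAux
open Pointwise

noncomputable def specCLM {a b : ℕ} (M : Matrix (Fin a) (Fin b) ℝ) :
    EuclideanSpace ℝ (Fin b) →L[ℝ] EuclideanSpace ℝ (Fin a) :=
  LinearMap.toContinuousLinearMap (Matrix.toEuclideanLin M)

lemma spec_eq {a b : ℕ} (M : Matrix (Fin a) (Fin b) ℝ) : spec M = ‖specCLM M‖ := rfl

lemma specCLM_apply {a b : ℕ} (M : Matrix (Fin a) (Fin b) ℝ) (x : Fin b → ℝ) :
    specCLM M ((WithLp.equiv 2 _).symm x) = (WithLp.equiv 2 (Fin a → ℝ)).symm (M *ᵥ x) := rfl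

lemma spec_nonneg {a b : ℕ} (M : Matrix (Fin a) (Fin b) ℝ) : 0 ≤ spec M := norm_nonneg _

lemma specCLM_mul {a b c : ℕ} (M : Matrix (Fin a) (Fin b) ℝ) (N : Matrix (Fin b) (Fin c) ℝ) :
    specCLM (M * N) = (specCLM M).comp (specCLM N) := by
  ext x
  simp [specCLM, Matrix.toEuclideanLin_apply, Matrix.mulVec_mulVec]

lemma spec_mul_le {a b c : ℕ} (M : Matrix (Fin a) (Fin b) ℝ) (N : Matrix (Fin b) (Fin c) ℝ) :
    spec (M * N) ≤ spec M * spec N := by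
  rw [spec_eq, spec_eq, spec_eq, specCLM_mul]
  exact ContinuousLinearMap.opNorm_comp_le _ _

lemma spec_transpose {a b : ℕ} (M : Matrix (Fin a) (Fin b) ℝ) : spec Mᵀ = spec M := by
  have h : Mᵀ = Mᴴ := (Matrix.conjTranspose_eq_transpose_of_trivial M).symm
  rw [spec_eq, spec_eq, h]
  have h2 : specCLM Mᴴ = ContinuousLinearMap.adjoint (specCLM M) := by
    rw [specCLM, Matrix.toEuclideanLin_conjTranspose_eq_adjoint]
    exact LinearMap.adjoint_toContinuousLinearMap _
  rw [h2]
  exact ContinuousLinearMap.adjoint.norm_map _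

lemma dot_eq_inner {n : ℕ} (x y : Fin n → ℝ) :
    x ⬝ᵥ y = (inner ℝ ((WithLp.equiv 2 (Fin n → ℝ)).symm x) ((WithLp.equiv 2 (Fin n → ℝ)).symm y) : ℝ) := by
  rw [PiLp.inner_apply]
  simp [dotProduct, mul_comm]

lemma dot_self_eq_norm_sq {n : ℕ} (x : Fin n → ℝ) :
    x ⬝ᵥ x = ‖(WithLp.equiv 2 (Fin n → ℝ)).symm x‖ ^ 2 := by
  rw [dot_eq_inner, ← real_inner_self_eq_norm_sq]

lemma quad_le_spec {n : ℕ} (M : Matrix (Fin n) (Fin n) ℝ) (x : Fin n → ℝ) :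
    x ⬝ᵥ (M *ᵥ x) ≤ spec M * (x ⬝ᵥ x) := by
  set x' := (WithLp.equiv 2 (Fin n → ℝ)).symm x with hx'
  have h1 : x ⬝ᵥ (M *ᵥ x) = (inner ℝ x' (specCLM M x') : ℝ) := by
    rw [specCLM_apply, dot_eq_inner]
  rw [h1, dot_self_eq_norm_sq]
  calc (inner ℝ x' (specCLM M x') : ℝ) ≤ ‖x'‖ * ‖specCLM M x'‖ := real_inner_le_norm _ _
    _ ≤ ‖x'‖ * (‖specCLM M‖ * ‖x'‖) := by
        gcongr; exact (specCLM M).le_opNorm x'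
    _ = spec M * ‖x'‖ ^ 2 := by rw [spec_eq]; ring

lemma isSymm_hermitian {n : ℕ} {M : Matrix (Fin n) (Fin n) ℝ} (h : M.IsSymm) :
    M.IsHermitian := by
  rwa [Matrix.IsHermitian, Matrix.conjTranspose_eq_transpose_of_trivial]

lemma ray_upper {n : ℕ} {S : Matrix (Fin n) (Fin n) ℝ} (hS : S.IsHermitian) (x : Fin n → ℝ) :
    x ⬝ᵥ (S *ᵥ x) ≤ lmax S * (x ⬝ᵥ x) := by
  set c := lmax S with hc
  have hT : (c • (1 : Matrix (Fin n) (Fin n) ℝ) - S).IsHermitian := by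
    apply Matrix.IsHermitian.sub _ hS
    simp [Matrix.IsHermitian, Matrix.conjTranspose_smul, Matrix.conjTranspose_one]
  have hspec : spectrum ℝ (c • (1 : Matrix (Fin n) (Fin n) ℝ) - S) = ({c} : Set ℝ) - spectrum ℝ S := by
    rw [show c • (1 : Matrix (Fin n) (Fin n) ℝ) = algebraMap ℝ _ c from
      (Algebra.algebraMap_eq_smul_one c).symm, ← spectrum.singleton_sub_eq]
  have hpos : (c • (1 : Matrix (Fin n) (Fin n) ℝ) - S).PosSemidef := by
    refine hT.posSemidef_iff_eigenvalues_nonneg.mpr fun i => ?_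
    show 0 ≤ hT.eigenvalues i
    have hmem := hT.eigenvalues_mem_spectrum_real i
    rw [hspec] at hmem
    obtain ⟨a, ha, b, hb, hab⟩ := hmem
    simp only [Set.mem_singleton_iff] at ha
    simp only at hab
    have hble : b ≤ c := by
      apply le_csSup _ hb
      exact (Matrix.finite_real_spectrum (A := S)).bddAbove
    linarith
  have := hpos.re_dotProduct_nonneg x
  simp only [RCLike.re_to_real, star_trivial] at this
  have hmv : (c • (1 : Matrix (Fin n) (Fin n) ℝ) - S) *ᵥ x = c • x - S *ᵥ x := by
    rw [Matrix.sub_mulVec, Matrix.smul_mulVec, Matrix.one_mulVec]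
  rw [hmv, dotProduct_sub, dotProduct_smul] at this
  have : x ⬝ᵥ S *ᵥ x ≤ c * (x ⬝ᵥ x) := by
    simpa [smul_eq_mul] using this
  linarith [this]

lemma ray_lower {n : ℕ} {S : Matrix (Fin n) (Fin n) ℝ} (hS : S.IsHermitian) (x : Fin n → ℝ) :
    lmin S * (x ⬝ᵥ x) ≤ x ⬝ᵥ (S *ᵥ x) := by
  set c := lmin S with hc
  have hT : (S - c • (1 : Matrix (Fin n) (Fin n) ℝ)).IsHermitian := by
    apply Matrix.IsHermitian.sub hS
    simp [Matrix.IsHermitian, Matrix.conjTranspose_smul, Matrix.conjTranspose_one]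
  have hspec : spectrum ℝ (S - c • (1 : Matrix (Fin n) (Fin n) ℝ)) = spectrum ℝ S - ({c} : Set ℝ) := by
    rw [show c • (1 : Matrix (Fin n) (Fin n) ℝ) = algebraMap ℝ _ c from
      (Algebra.algebraMap_eq_smul_one c).symm, ← spectrum.sub_singleton_eq]
  have hpos : (S - c • (1 : Matrix (Fin n) (Fin n) ℝ)).PosSemidef := by
    refine hT.posSemidef_iff_eigenvalues_nonneg.mpr fun i => ?_
    show 0 ≤ hT.eigenvalues i
    have hmem := hT.eigenvalues_mem_spectrum_real i
    rw [hspec] at hmem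
    obtain ⟨a, ha, b, hb, hab⟩ := hmem
    simp only [Set.mem_singleton_iff] at hb
    simp only at hab
    have hble : c ≤ a := by
      apply csInf_le _ ha
      exact (Matrix.finite_real_spectrum (A := S)).bddBelow
    linarith
  have := hpos.re_dotProduct_nonneg x
  simp only [RCLike.re_to_real, star_trivial] at this
  have hmv : (S - c • (1 : Matrix (Fin n) (Fin n) ℝ)) *ᵥ x = S *ᵥ x - c • x := by
    rw [Matrix.sub_mulVec, Matrix.smul_mulVec, Matrix.one_mulVec]
  rw [hmv, dotProduct_sub, dotProduct_smul] at this
  have h2 : c * (x ⬝ᵥ x) ≤ x ⬝ᵥ S *ᵥ x := by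
    simpa [smul_eq_mul] using this
  linarith

lemma lmin_attained {n : ℕ} (hn : 0 < n) {S : Matrix (Fin n) (Fin n) ℝ} (hS : S.IsHermitian) :
    ∃ v : Fin n → ℝ, v ⬝ᵥ v = 1 ∧ v ⬝ᵥ (S *ᵥ v) = lmin S := by
  haveI : Nonempty (Fin n) := Fin.pos_iff_nonempty.mp hn
  have hne : (spectrum ℝ S).Nonempty := by
    rw [hS.spectrum_real_eq_range_eigenvalues]
    exact Set.range_nonempty _
  have hmem : lmin S ∈ spectrum ℝ S :=
    hne.csInf_mem (Matrix.finite_real_spectrum (A := S))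
  rw [hS.spectrum_real_eq_range_eigenvalues] at hmem
  obtain ⟨i, hi⟩ := hmem
  have hdot : ∀ u w : Fin n → ℝ, u ⬝ᵥ w = (inner ℝ ((WithLp.equiv 2 (Fin n → ℝ)).symm u)
      ((WithLp.equiv 2 (Fin n → ℝ)).symm w) : ℝ) := by
    intro u w
    rw [PiLp.inner_apply]
    simp [dotProduct, mul_comm]
  have hn1 : ‖hS.eigenvectorBasis i‖ = 1 := hS.eigenvectorBasis.orthonormal.1 i
  have hvv : (⇑(hS.eigenvectorBasis i) : Fin n → ℝ) ⬝ᵥ ⇑(hS.eigenvectorBasis i) = 1 := by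
    rw [hdot]
    have : ((WithLp.equiv 2 (Fin n → ℝ)).symm ⇑(hS.eigenvectorBasis i)) =
        hS.eigenvectorBasis i := rfl
    rw [this, real_inner_self_eq_norm_sq, hn1]
    norm_num
  refine ⟨⇑(hS.eigenvectorBasis i), hvv, ?_⟩
  rw [hS.mulVec_eigenvectorBasis, dotProduct_smul, smul_eq_mul, hvv, mul_one, hi]

lemma weyl_lmin {n : ℕ} (hn : 0 < n) {S T : Matrix (Fin n) (Fin n) ℝ}
    (hS : S.IsHermitian) (hT : T.IsHermitian) :
    lmin S - lmin T ≤ spec (S - T) := by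
  obtain ⟨v, hv1, hv2⟩ := lmin_attained hn hT
  have h1 : lmin S ≤ v ⬝ᵥ (S *ᵥ v) := by
    have := ray_lower hS v
    rwa [hv1, mul_one] at this
  have h2 : v ⬝ᵥ ((S - T) *ᵥ v) ≤ spec (S - T) * (v ⬝ᵥ v) := quad_le_spec _ v
  rw [hv1, mul_one] at h2
  have h3 : v ⬝ᵥ ((S - T) *ᵥ v) = v ⬝ᵥ (S *ᵥ v) - v ⬝ᵥ (T *ᵥ v) := by
    rw [Matrix.sub_mulVec, dotProduct_sub]
  linarith

lemma spec_smul_one {q : ℕ} (hq : 0 < q) (c : ℝ) :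
    spec (c • (1 : Matrix (Fin q) (Fin q) ℝ)) = |c| := by
  haveI : Nonempty (Fin q) := Fin.pos_iff_nonempty.mp hq
  haveI : Nontrivial (EuclideanSpace ℝ (Fin q)) := (WithLp.equiv 2 (Fin q → ℝ)).nontrivial
  have h : specCLM (c • (1 : Matrix (Fin q) (Fin q) ℝ)) =
      c • ContinuousLinearMap.id ℝ (EuclideanSpace ℝ (Fin q)) := by
    ext1 x
    apply (WithLp.equiv 2 (Fin q → ℝ)).injective
    simp [specCLM, Matrix.toEuclideanLin_apply, Matrix.smul_mulVec, Matrix.one_mulVec]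
  rw [spec_eq, h]
  apply ContinuousLinearMap.homothety_norm
  intro x
  rw [show (c • ContinuousLinearMap.id ℝ (EuclideanSpace ℝ (Fin q))) x = c • x from rfl,
    norm_smul, Real.norm_eq_abs]

lemma spec_sub_le {q r : ℕ} (P Q : Matrix (Fin q) (Fin r) ℝ) :
    spec (P - Q) ≤ spec P + spec Q := by
  have h : specCLM (P - Q) = specCLM P - specCLM Q := by
    simp [specCLM, map_sub]
  rw [spec_eq, h]
  exact (norm_sub_le _ _).trans (by rw [← spec_eq, ← spec_eq])

lemma herm_congr {a b : ℕ} (W : Matrix (Fin a) (Fin b) ℝ) {C : Matrix (Fin a) (Fin a) ℝ}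
    (hC : C.IsHermitian) : (Wᵀ * C * W).IsHermitian := by
  have hCt : Cᵀ = C := by
    rw [← Matrix.conjTranspose_eq_transpose_of_trivial]; exact hC
  rw [Matrix.IsHermitian, Matrix.conjTranspose_eq_transpose_of_trivial,
    Matrix.transpose_mul, Matrix.transpose_mul, Matrix.transpose_transpose, hCt]
  exact (Matrix.mul_assoc Wᵀ C W).symm

lemma lmax_nonneg {n : ℕ} (hn : 0 < n) {S : Matrix (Fin n) (Fin n) ℝ}
    (hP : S.PosSemidef) : 0 ≤ lmax S := by
  haveI : Nonempty (Fin n) := Fin.pos_iff_nonempty.mp hn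
  obtain ⟨i⟩ := ‹Nonempty (Fin n)›
  have h1 : 0 ≤ hP.1.eigenvalues i := hP.eigenvalues_nonneg i
  have h2 : hP.1.eigenvalues i ≤ lmax S := by
    apply le_csSup (Matrix.finite_real_spectrum (A := S)).bddAbove
    exact hP.1.eigenvalues_mem_spectrum_real i
  linarith

open scoped MatrixOrder in
lemma dot_le_inv_smul {p : ℕ} {A : Matrix (Fin p) (Fin p) ℝ} (hA : A.PosDef) (u : Fin p → ℝ) :
    u ⬝ᵥ u ≤ spec A⁻¹ * (u ⬝ᵥ (A *ᵥ u)) := by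
  set R := CFC.sqrt A with hRdef
  have hRH : R.IsHermitian := (CFC.sqrt_nonneg A).posSemidef.1
  have hRR : R * R = A := CFC.sqrt_mul_sqrt_self A hA.posSemidef.nonneg
  have hdet : IsUnit R.det := by
    rw [isUnit_iff_ne_zero]
    intro h0
    have : A.det = 0 := by rw [← hRR, Matrix.det_mul, h0, mul_zero]
    exact (ne_of_gt hA.det_pos) this
  have hkey : R * A⁻¹ * R = 1 := by
    rw [← hRR, Matrix.mul_inv_rev, ← Matrix.mul_assoc, Matrix.mul_nonsing_inv R hdet,
      Matrix.one_mul, Matrix.nonsing_inv_mul R hdet]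
  have hRsym : Rᵀ = R := by
    rw [← Matrix.conjTranspose_eq_transpose_of_trivial]; exact hRH
  have hsymdot : ∀ z : Fin p → ℝ, u ⬝ᵥ (R *ᵥ z) = (R *ᵥ u) ⬝ᵥ z := by
    intro z
    rw [Matrix.dotProduct_mulVec, ← hRsym, Matrix.vecMul_transpose, hRsym]
  have e1 : (R *ᵥ u) ⬝ᵥ (A⁻¹ *ᵥ (R *ᵥ u)) = u ⬝ᵥ u := by
    rw [← hsymdot, Matrix.mulVec_mulVec, Matrix.mulVec_mulVec, hkey, Matrix.one_mulVec]
  have e2 : (R *ᵥ u) ⬝ᵥ (R *ᵥ u) = u ⬝ᵥ (A *ᵥ u) := by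
    rw [← hsymdot, Matrix.mulVec_mulVec, hRR]
  calc u ⬝ᵥ u = (R *ᵥ u) ⬝ᵥ (A⁻¹ *ᵥ (R *ᵥ u)) := e1.symm
    _ ≤ spec A⁻¹ * ((R *ᵥ u) ⬝ᵥ (R *ᵥ u)) := quad_le_spec _ _
    _ = spec A⁻¹ * (u ⬝ᵥ (A *ᵥ u)) := by rw [e2]

lemma spec_sq_le {p q : ℕ} (hq : 0 < q) {A : Matrix (Fin p) (Fin p) ℝ} (hA : A.PosDef)
    (Z : Matrix (Fin p) (Fin q) ℝ) :
    spec Z ^ 2 ≤ lmax (Zᵀ * A * Z) * spec A⁻¹ := by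
  have hPSD : (Zᵀ * A * Z).PosSemidef := by
    have h := hA.posSemidef.conjTranspose_mul_mul_same Z
    rwa [Matrix.conjTranspose_eq_transpose_of_trivial] at h
  set c := lmax (Zᵀ * A * Z) * spec A⁻¹ with hc
  have hcnn : 0 ≤ c := mul_nonneg (lmax_nonneg hq hPSD) (spec_nonneg _)
  have hbound : ∀ x : EuclideanSpace ℝ (Fin q), ‖specCLM Z x‖ ≤ Real.sqrt c * ‖x‖ := by
    intro x
    set x' : Fin q → ℝ := WithLp.equiv 2 (Fin q → ℝ) x with hx'
    have hxx : (WithLp.equiv 2 (Fin q → ℝ)).symm x' = x := by simp [hx']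
    have hq1 : ‖specCLM Z x‖ ^ 2 = (Z *ᵥ x') ⬝ᵥ (Z *ᵥ x') := by
      rw [← hxx, specCLM_apply, dot_self_eq_norm_sq]
    have hq2 : x' ⬝ᵥ ((Zᵀ * A * Z) *ᵥ x') = (Z *ᵥ x') ⬝ᵥ (A *ᵥ (Z *ᵥ x')) := by
      rw [Matrix.mul_assoc, ← Matrix.mulVec_mulVec, Matrix.dotProduct_mulVec x' Zᵀ,
        Matrix.vecMul_transpose, Matrix.mulVec_mulVec]
    have hchain : ‖specCLM Z x‖ ^ 2 ≤ c * ‖x‖ ^ 2 := by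
      rw [hq1]
      calc (Z *ᵥ x') ⬝ᵥ (Z *ᵥ x') ≤ spec A⁻¹ * ((Z *ᵥ x') ⬝ᵥ (A *ᵥ (Z *ᵥ x'))) :=
            dot_le_inv_smul hA _
        _ = spec A⁻¹ * (x' ⬝ᵥ ((Zᵀ * A * Z) *ᵥ x')) := by rw [hq2]
        _ ≤ spec A⁻¹ * (lmax (Zᵀ * A * Z) * (x' ⬝ᵥ x')) := by
            apply mul_le_mul_of_nonneg_left (ray_upper hPSD.1 x') (spec_nonneg _)
        _ = c * (x' ⬝ᵥ x') := by rw [hc]; ring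
        _ = c * ‖x‖ ^ 2 := by rw [dot_self_eq_norm_sq, hxx]
    have h1 : ‖specCLM Z x‖ = Real.sqrt (‖specCLM Z x‖ ^ 2) := by
      rw [Real.sqrt_sq (norm_nonneg _)]
    rw [h1]
    calc Real.sqrt (‖specCLM Z x‖ ^ 2) ≤ Real.sqrt (c * ‖x‖ ^ 2) := Real.sqrt_le_sqrt hchain
      _ = Real.sqrt c * ‖x‖ := by
          rw [Real.sqrt_mul hcnn, Real.sqrt_sq (norm_nonneg _)]
  have hZ : spec Z ≤ Real.sqrt c := by
    rw [spec_eq]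
    exact ContinuousLinearMap.opNorm_le_bound _ (Real.sqrt_nonneg _) hbound
  calc spec Z ^ 2 ≤ Real.sqrt c ^ 2 := by
        apply pow_le_pow_left₀ (spec_nonneg _) hZ 2
    _ = c := Real.sq_sqrt hcnn

end specAux

lemma spec_neg {a b : ℕ} (M : Matrix (Fin a) (Fin b) ℝ) : spec (-M) = spec M := by
  have h : specCLM (-M) = -specCLM M := by simp [specCLM, map_neg]
  rw [spec_eq, h, norm_neg, ← spec_eq]


/-- For `A` symmetric positive definite and `B` symmetric:
`‖γ(B) − γ(A)‖ ≤ ‖Zᵀ(B−A)Z‖ + ‖Wᵀ(B−A)W‖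
  ≤ (λ_max(ZᵀAZ) + λ_max(WᵀAW))·‖A⁻¹‖·‖B−A‖`. -/
theorem stmt4 {p m : ℕ} (hp : 0 < p) (hm : 0 < m)
    (Z : Matrix (Fin p) (Fin m) ℝ) (y : Fin p → ℝ)
    (A B : Matrix (Fin p) (Fin p) ℝ) (hA : A.PosDef) (hBsymm : B.IsSymm) :
    spec (gam Z y B - gam Z y A) ≤
        spec (Zᵀ * (B - A) * Z) + spec ((appendCol Z y)ᵀ * (B - A) * appendCol Z y) ∧
      spec (Zᵀ * (B - A) * Z) + spec ((appendCol Z y)ᵀ * (B - A) * appendCol Z y) ≤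
        (lmax (Zᵀ * A * Z) + lmax ((appendCol Z y)ᵀ * A * appendCol Z y)) *
          (spec A⁻¹ * spec (B - A)) := by
  set W := appendCol Z y with hW
  have hAH : A.IsHermitian := hA.1
  have hBH : B.IsHermitian := isSymm_hermitian hBsymm
  have hWB : (Wᵀ * B * W).IsHermitian := herm_congr W hBH
  have hWA : (Wᵀ * A * W).IsHermitian := herm_congr W hAH
  have hWdiff : Wᵀ * B * W - Wᵀ * A * W = Wᵀ * (B - A) * W := by
    rw [Matrix.mul_sub, Matrix.sub_mul]
  have hm1 : 0 < m + 1 := Nat.succ_pos m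
  have hweyl : |lmin (Wᵀ * B * W) - lmin (Wᵀ * A * W)| ≤ spec (Wᵀ * (B - A) * W) := by
    rw [abs_sub_le_iff]
    constructor
    · have h1 := weyl_lmin hm1 hWB hWA
      rwa [hWdiff] at h1
    · have h2 := weyl_lmin hm1 hWA hWB
      rwa [show Wᵀ * A * W - Wᵀ * B * W = -(Wᵀ * B * W - Wᵀ * A * W) from (neg_sub _ _).symm,
        spec_neg, hWdiff] at h2
  constructor
  · have hgam : gam Z y B - gam Z y A =
        Zᵀ * (B - A) * Z -
          (lmin (Wᵀ * B * W) - lmin (Wᵀ * A * W)) • (1 : Matrix (Fin m) (Fin m) ℝ) := by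
      simp only [gam, ← hW, Matrix.mul_sub, Matrix.sub_mul, sub_smul]
      abel
    rw [hgam]
    calc spec (Zᵀ * (B - A) * Z -
          (lmin (Wᵀ * B * W) - lmin (Wᵀ * A * W)) • (1 : Matrix (Fin m) (Fin m) ℝ)) ≤
        spec (Zᵀ * (B - A) * Z) +
          spec ((lmin (Wᵀ * B * W) - lmin (Wᵀ * A * W)) • (1 : Matrix (Fin m) (Fin m) ℝ)) :=
          spec_sub_le _ _
      _ ≤ spec (Zᵀ * (B - A) * Z) + spec (Wᵀ * (B - A) * W) := by
          rw [spec_smul_one hm]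
          linarith [hweyl]
  · have key : ∀ {q : ℕ}, 0 < q → ∀ (X : Matrix (Fin p) (Fin q) ℝ),
        spec (Xᵀ * (B - A) * X) ≤ lmax (Xᵀ * A * X) * (spec A⁻¹ * spec (B - A)) := by
      intro q hq X
      calc spec (Xᵀ * (B - A) * X) ≤ spec (Xᵀ * (B - A)) * spec X := spec_mul_le _ _
        _ ≤ (spec Xᵀ * spec (B - A)) * spec X :=
            mul_le_mul_of_nonneg_right (spec_mul_le _ _) (spec_nonneg _)
        _ = spec X ^ 2 * spec (B - A) := by rw [spec_transpose]; ring
        _ ≤ (lmax (Xᵀ * A * X) * spec A⁻¹) * spec (B - A) :=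
            mul_le_mul_of_nonneg_right (spec_sq_le hq hA X) (spec_nonneg _)
        _ = lmax (Xᵀ * A * X) * (spec A⁻¹ * spec (B - A)) := by ring
    have k1 := key hm Z
    have k2 := key hm1 W
    have hring : (lmax (Zᵀ * A * Z) + lmax (Wᵀ * A * W)) * (spec A⁻¹ * spec (B - A)) =
        lmax (Zᵀ * A * Z) * (spec A⁻¹ * spec (B - A)) +
        lmax (Wᵀ * A * W) * (spec A⁻¹ * spec (B - A)) := by ring
    rw [hring]
    linarith
end
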